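/- arXiv:1811.02655 — 9 statements merged into one kernel-verified Lean document; each statement's English description precedes it below -/
import Mathlib

section
/- The function f defined on [0,1]^2 × ℝ₊² by f(z,x) = (x₁-x₂)²/z₁ if x₁ ≥ x₂ and f(z,x) = (x₁-x₂)²/z₂ if x₁ ≤ x₂ (with the convention a/0 = ∞ if a > 0 and 0/0 = 0) is a convex function. -/
/-- Division with the convention `a/0 = ∞` if `a > 0` and `0/0 = 0`. -/
noncomputable def pdiv (a b : ℝ) : EReal :=
  if 0 < b then ((a / b : ℝ) : EReal) else if 0 < a then ⊤ else 0

/-- The function `f` on `[0,1]² × ℝ₊²`. -/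
noncomputable def f2 (z₁ z₂ x₁ x₂ : ℝ) : EReal :=
  if x₂ ≤ x₁ then pdiv ((x₁ - x₂)^2) z₁ else pdiv ((x₁ - x₂)^2) z₂

/-- Auxiliary: `Q z t = pdiv (t²) z`. -/
noncomputable def Q (z t : ℝ) : EReal := pdiv (t^2) z

lemma Q_nonneg (z t : ℝ) : 0 ≤ Q z t := by
  unfold Q pdiv
  split_ifs with h h'
  · exact_mod_cast div_nonneg (sq_nonneg t) h.le
  · exact le_top
  · exact le_rfl

lemma Q_zero (z : ℝ) : Q z 0 = 0 := by
  unfold Q pdiv; split_ifs with h h' <;> norm_num at *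

lemma Q_coe {z t : ℝ} (h : 0 < z ∨ t = 0) : Q z t = ((t^2/z : ℝ) : EReal) := by
  unfold Q pdiv
  rcases h with h | h
  · rw [if_pos h]
  · subst h
    split_ifs with h1 h2 <;> norm_num
    nlinarith

lemma Q_mono {z t t' : ℝ} (ht : 0 ≤ t) (h : t ≤ t') : Q z t ≤ Q z t' := by
  have ht2 : t^2 ≤ t'^2 := by nlinarith
  unfold Q pdiv
  split_ifs with h1 h2 h3
  · exact EReal.coe_le_coe_iff.2 (by gcongr)
  · exact le_top
  · exact absurd (lt_of_lt_of_le h2 ht2) h3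
  · exact le_top
  · exact le_rfl

lemma real_persp {z w t s θ : ℝ} (hz : 0 ≤ z) (hw : 0 ≤ w) (h0 : 0 < θ) (h1 : θ < 1)
    (hzt : z = 0 → t = 0) (hws : w = 0 → s = 0) :
    (θ*t + (1-θ)*s)^2 / (θ*z + (1-θ)*w) ≤ θ * (t^2/z) + (1-θ) * (s^2/w) := by
  rcases eq_or_lt_of_le hz with hz0 | hz0
  · have ht : t = 0 := hzt hz0.symm
    subst ht
    rw [← hz0]
    rcases eq_or_lt_of_le hw with hw0 | hw0
    · have hs : s = 0 := hws hw0.symm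
      subst hs; norm_num
    · have key : (θ*0 + (1-θ)*s)^2 / (θ*0 + (1-θ)*w) = (1-θ) * (s^2/w) := by
        rw [show θ*0 + (1-θ)*s = (1-θ)*s by ring, show θ*0 + (1-θ)*w = (1-θ)*w by ring]
        rw [mul_pow, mul_div_mul_comm, sq, mul_div_assoc, div_self (by linarith)]
        ring
      rw [key]; norm_num
  · rcases eq_or_lt_of_le hw with hw0 | hw0
    · have hs : s = 0 := hws hw0.symm
      subst hs
      rw [← hw0]
      have key : (θ*t + (1-θ)*0)^2 / (θ*z + (1-θ)*0) = θ * (t^2/z) := by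
        rw [show θ*t + (1-θ)*0 = θ*t by ring, show θ*z + (1-θ)*0 = θ*z by ring]
        rw [mul_pow, mul_div_mul_comm, sq, mul_div_assoc, div_self (by linarith)]
        ring
      rw [key]; norm_num
    · have hc : 0 < θ*z + (1-θ)*w := by nlinarith
      rw [div_le_iff₀ hc]
      have e : θ * (t^2/z) + (1-θ)*(s^2/w) = (θ*t^2*w + (1-θ)*s^2*z)/(z*w) := by
        field_simp
      rw [e, div_mul_eq_mul_div, le_div_iff₀ (mul_pos hz0 hw0)]
      nlinarith [mul_nonneg (mul_nonneg h0.le (by linarith : (0:ℝ) ≤ 1-θ)) (sq_nonneg (t*w - s*z))]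

lemma Q_convex {z w t s θ : ℝ} (hz : 0 ≤ z) (hw : 0 ≤ w) (hθ : 0 ≤ θ) (hθ1 : θ ≤ 1) :
    Q (θ*z + (1-θ)*w) (θ*t + (1-θ)*s)
      ≤ (θ : EReal) * Q z t + ((1-θ : ℝ) : EReal) * Q w s := by
  rcases eq_or_lt_of_le hθ with h0 | h0
  · rw [← h0]
    norm_num
  rcases eq_or_lt_of_le hθ1 with h1 | h1
  · rw [h1]
    norm_num
  have h1θ : (0:ℝ) < 1 - θ := by linarith
  by_cases hzt : z = 0 ∧ t ≠ 0
  · have hQ : Q z t = ⊤ := by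
      unfold Q pdiv
      rw [if_neg (by rw [hzt.1]; exact lt_irrefl 0),
        if_pos ((sq_nonneg t).lt_of_ne (Ne.symm (pow_ne_zero 2 hzt.2)))]
    rw [hQ, EReal.coe_mul_top_of_pos h0,
      EReal.top_add_of_ne_bot (fun hb => absurd (hb ▸ mul_nonneg (by exact_mod_cast h1θ.le) (Q_nonneg w s)) (by simp))]
    exact le_top
  by_cases hws : w = 0 ∧ s ≠ 0
  · have hQ : Q w s = ⊤ := by
      unfold Q pdiv
      rw [if_neg (by rw [hws.1]; exact lt_irrefl 0),
        if_pos ((sq_nonneg s).lt_of_ne (Ne.symm (pow_ne_zero 2 hws.2)))]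
    rw [hQ, EReal.coe_mul_top_of_pos (by exact_mod_cast h1θ),
      EReal.add_top_of_ne_bot (fun hb => absurd (hb ▸ mul_nonneg (by exact_mod_cast hθ) (Q_nonneg z t)) (by simp))]
    exact le_top
  push_neg at hzt hws
  rcases eq_or_lt_of_le (by positivity : (0:ℝ) ≤ θ*z + (1-θ)*w) with hc | hc
  · have hz0 : z = 0 := by nlinarith
    have hw0 : w = 0 := by nlinarith
    have ht : t = 0 := hzt hz0
    have hs : s = 0 := hws hw0
    subst ht hs
    rw [show θ*(0:ℝ) + (1-θ)*0 = 0 by ring, Q_zero]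
    exact add_nonneg (mul_nonneg (by exact_mod_cast hθ) (Q_nonneg z 0))
      (mul_nonneg (by exact_mod_cast h1θ.le) (Q_nonneg w 0))
  have hQz : Q z t = ((t^2/z : ℝ) : EReal) := by
    rcases eq_or_lt_of_le hz with h | h
    · exact Q_coe (Or.inr (hzt h.symm))
    · exact Q_coe (Or.inl h)
  have hQw : Q w s = ((s^2/w : ℝ) : EReal) := by
    rcases eq_or_lt_of_le hw with h | h
    · exact Q_coe (Or.inr (hws h.symm))
    · exact Q_coe (Or.inl h)
  rw [Q_coe (Or.inl hc), hQz, hQw, ← EReal.coe_mul, ← EReal.coe_mul, ← EReal.coe_add]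
  exact EReal.coe_le_coe_iff.2 (real_persp hz hw h0 h1
    (fun h => hzt h) (fun h => hws h))

lemma f2_eq (z₁ z₂ x₁ x₂ : ℝ) :
    f2 z₁ z₂ x₁ x₂ = Q z₁ (max (x₁-x₂) 0) + Q z₂ (max (x₂-x₁) 0) := by
  unfold f2
  split_ifs with h
  · rw [max_eq_left (by linarith), max_eq_right (by linarith), Q_zero, add_zero]
    rfl
  · push_neg at h
    rw [max_eq_right (by linarith), max_eq_left (by linarith), Q_zero, zero_add]
    unfold Q
    rw [show (x₂-x₁)^2 = (x₁-x₂)^2 by ring]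

/-- `f` is convex on `[0,1]² × ℝ₊²`. -/
theorem f2_convex :
    ∀ z₁ z₂ x₁ x₂ w₁ w₂ u₁ u₂ θ : ℝ,
      z₁ ∈ Set.Icc (0:ℝ) 1 → z₂ ∈ Set.Icc (0:ℝ) 1 → 0 ≤ x₁ → 0 ≤ x₂ →
      w₁ ∈ Set.Icc (0:ℝ) 1 → w₂ ∈ Set.Icc (0:ℝ) 1 → 0 ≤ u₁ → 0 ≤ u₂ →
      0 ≤ θ → θ ≤ 1 →
      f2 (θ*z₁ + (1-θ)*w₁) (θ*z₂ + (1-θ)*w₂) (θ*x₁ + (1-θ)*u₁) (θ*x₂ + (1-θ)*u₂)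
        ≤ (θ : EReal) * f2 z₁ z₂ x₁ x₂ + ((1-θ : ℝ) : EReal) * f2 w₁ w₂ u₁ u₂ := by
  intro z₁ z₂ x₁ x₂ w₁ w₂ u₁ u₂ θ hz₁ hz₂ hx₁ hx₂ hw₁ hw₂ hu₁ hu₂ hθ hθ1
  have h1θ : (0:ℝ) ≤ 1 - θ := by linarith
  rw [f2_eq, f2_eq, f2_eq]
  set a₁ := max (x₁ - x₂) 0 with ha₁
  set a₂ := max (x₂ - x₁) 0 with ha₂
  set b₁ := max (u₁ - u₂) 0 with hb₁
  set b₂ := max (u₂ - u₁) 0 with hb₂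
  have key₁ : Q (θ*z₁ + (1-θ)*w₁) (max (θ*x₁ + (1-θ)*u₁ - (θ*x₂ + (1-θ)*u₂)) 0)
      ≤ (θ : EReal) * Q z₁ a₁ + ((1-θ : ℝ) : EReal) * Q w₁ b₁ := by
    refine (Q_mono (le_max_right _ _) ?_).trans (Q_convex hz₁.1 hw₁.1 hθ hθ1)
    apply max_le
    · nlinarith [le_max_left (x₁ - x₂) (0:ℝ), le_max_left (u₁ - u₂) (0:ℝ)]
    · have := le_max_right (x₁ - x₂) (0:ℝ)
      have := le_max_right (u₁ - u₂) (0:ℝ)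
      nlinarith
  have key₂ : Q (θ*z₂ + (1-θ)*w₂) (max (θ*x₂ + (1-θ)*u₂ - (θ*x₁ + (1-θ)*u₁)) 0)
      ≤ (θ : EReal) * Q z₂ a₂ + ((1-θ : ℝ) : EReal) * Q w₂ b₂ := by
    refine (Q_mono (le_max_right _ _) ?_).trans (Q_convex hz₂.1 hw₂.1 hθ hθ1)
    apply max_le
    · nlinarith [le_max_left (x₂ - x₁) (0:ℝ), le_max_left (u₂ - u₁) (0:ℝ)]
    · have := le_max_right (x₂ - x₁) (0:ℝ)
      have := le_max_right (u₂ - u₁) (0:ℝ)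
      nlinarith
  calc Q (θ*z₁ + (1-θ)*w₁) (max (θ*x₁ + (1-θ)*u₁ - (θ*x₂ + (1-θ)*u₂)) 0)
        + Q (θ*z₂ + (1-θ)*w₂) (max (θ*x₂ + (1-θ)*u₂ - (θ*x₁ + (1-θ)*u₁)) 0)
      ≤ ((θ : EReal) * Q z₁ a₁ + ((1-θ : ℝ) : EReal) * Q w₁ b₁)
        + ((θ : EReal) * Q z₂ a₂ + ((1-θ : ℝ) : EReal) * Q w₂ b₂) := add_le_add key₁ key₂
    _ = (θ : EReal) * (Q z₁ a₁ + Q z₂ a₂) + ((1-θ : ℝ) : EReal) * (Q w₁ b₁ + Q w₂ b₂) := by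
        rw [EReal.left_distrib_of_nonneg (Q_nonneg _ _) (Q_nonneg _ _),
          EReal.left_distrib_of_nonneg (Q_nonneg _ _) (Q_nonneg _ _)]
        exact (add_add_add_comm _ _ _ _).symm
end

section
/- The function g on [0,1]² × ℝ₊² defined by g(z,x;d₁,d₂) = max{ d₁·f(z₁,z₂,x₁,x₂/d₁) + (x₂²/z₂)(d₂ - 1/d₁), d₂·f(z₁,z₂,x₁/d₂,x₂) + (x₁²/z₁)(d₁ - 1/d₂) } is convex for any fixed parameters d₁, d₂ > 0 with d₁d₂ ≥ 1. -/
/-- The function `g(z,x;d₁,d₂)`, the pointwise maximum of the two strengthened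
decompositions. -/
noncomputable def g2 (d₁ d₂ z₁ z₂ x₁ x₂ : ℝ) : EReal :=
  max ((d₁ : EReal) * f2 z₁ z₂ x₁ (x₂ / d₁) + pdiv (x₂^2) z₂ * ((d₂ - 1/d₁ : ℝ) : EReal))
      ((d₂ : EReal) * f2 z₁ z₂ (x₁ / d₂) x₂ + pdiv (x₁^2) z₁ * ((d₁ - 1/d₂ : ℝ) : EReal))

lemma real_key {c t s z w θ : ℝ} (hc : 0 ≤ c) (hz : 0 ≤ z) (hw : 0 ≤ w)
    (hθ : 0 < θ) (hθ1 : θ < 1) (ht : 0 < z ∨ t ≤ 0) (hs : 0 < w ∨ s ≤ 0) :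
    c * (max (θ*t+(1-θ)*s) 0)^2 / (θ*z+(1-θ)*w) ≤
      θ * (c * (max t 0)^2 / z) + (1-θ) * (c * (max s 0)^2 / w) := by
  have hθ1' : (0:ℝ) < 1 - θ := by linarith
  set a := max t 0 with ha
  set b := max s 0 with hb
  have ha0 : 0 ≤ a := le_max_right _ _
  have hb0 : 0 ≤ b := le_max_right _ _
  set N := max (θ*t+(1-θ)*s) 0 with hN
  have hN0 : 0 ≤ N := le_max_right _ _
  have hNM : N ≤ θ*a+(1-θ)*b := by
    apply max_le
    · have h1 : θ*t ≤ θ*a := by nlinarith [le_max_left t (0:ℝ)]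
      have h2 : (1-θ)*s ≤ (1-θ)*b := by nlinarith [le_max_left s (0:ℝ)]
      linarith
    · positivity
  have hN2 : N^2 ≤ (θ*a+(1-θ)*b)^2 := by nlinarith
  by_cases hz' : 0 < z
  · by_cases hw' : 0 < w
    · have hZ : 0 < θ*z+(1-θ)*w := by positivity
      have e1 : θ*(c*a^2/z) = (θ*c*a^2*w)/(z*w) := by field_simp
      have e2 : (1-θ)*(c*b^2/w) = ((1-θ)*c*b^2*z)/(z*w) := by field_simp
      rw [e1, e2, ← add_div, div_le_div_iff₀ hZ (mul_pos hz' hw')]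
      nlinarith [mul_nonneg (mul_nonneg hc (mul_nonneg hθ.le hθ1'.le)) (sq_nonneg (a*w - b*z)),
        mul_nonneg (mul_nonneg hc (mul_nonneg hz'.le hw'.le)) (sub_nonneg.2 hN2)]
    · have hw0 : w = 0 := le_antisymm (not_lt.1 hw') hw
      have hs0 : s ≤ 0 := hs.resolve_left hw'
      have hb' : b = 0 := max_eq_right hs0
      subst hw0
      have hZ : θ*z+(1-θ)*0 = θ*z := by ring
      rw [hZ, hb']
      have e0 : (1-θ)*(c*(0:ℝ)^2/0) = 0 := by simp
      rw [e0, add_zero, div_le_iff₀ (by positivity)]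
      have e : θ*(c*a^2/z)*(θ*z) = θ^2*(c*a^2) := by field_simp
      rw [e]
      have hNa : N ≤ θ*a := by rw [hb'] at hNM; linarith
      nlinarith [mul_le_mul_of_nonneg_left (pow_le_pow_left₀ hN0 hNa 2) hc]
  · have hz0 : z = 0 := le_antisymm (not_lt.1 hz') hz
    have ht0 : t ≤ 0 := ht.resolve_left hz'
    have ha' : a = 0 := max_eq_right ht0
    subst hz0
    by_cases hw' : 0 < w
    · rw [ha']
      have hZ : θ*0+(1-θ)*w = (1-θ)*w := by ring
      rw [hZ]
      have e0 : θ*(c*(0:ℝ)^2/0) = 0 := by simp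
      rw [e0, zero_add, div_le_iff₀ (by positivity)]
      have e : (1-θ)*(c*b^2/w)*((1-θ)*w) = (1-θ)^2*(c*b^2) := by field_simp
      rw [e]
      have hNb : N ≤ (1-θ)*b := by rw [ha'] at hNM; linarith
      nlinarith [mul_le_mul_of_nonneg_left (pow_le_pow_left₀ hN0 hNb 2) hc]
    · have hw0 : w = 0 := le_antisymm (not_lt.1 hw') hw
      have hs0 : s ≤ 0 := hs.resolve_left hw'
      have hb' : b = 0 := max_eq_right hs0
      subst hw0
      have hN' : N = 0 := le_antisymm (by rw [ha', hb'] at hNM; linarith) hN0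
      rw [hN', ha', hb']
      simp

lemma pdiv_nonneg {a b : ℝ} (ha : 0 ≤ a) : 0 ≤ pdiv a b := by
  unfold pdiv
  split_ifs with h1 h2
  · exact_mod_cast div_nonneg ha h1.le
  · exact le_top
  · exact le_refl _

lemma pdiv_zero (b : ℝ) : pdiv 0 b = 0 := by
  unfold pdiv
  split_ifs with h1 h2
  · norm_num
  · exact absurd h2 (lt_irrefl 0)
  · rfl

lemma pdiv_eq_coe {a b : ℝ} (h : 0 < b ∨ a = 0) : pdiv a b = ((a/b : ℝ) : EReal) := by
  unfold pdiv
  rcases h with h | rfl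
  · rw [if_pos h]
  · split_ifs with h1 h2
    · rfl
    · exact absurd h2 (lt_irrefl 0)
    · norm_num

lemma pdiv_ne_top {a b : ℝ} (ha : 0 ≤ a) (h : pdiv a b ≠ ⊤) : 0 < b ∨ a = 0 := by
  unfold pdiv at h
  split_ifs at h with h1 h2
  · exact Or.inl h1
  · exact absurd rfl h
  · exact Or.inr (le_antisymm (not_lt.1 h2) ha)

lemma mul_pdiv {c : ℝ} (hc : 0 < c) (a b : ℝ) : (c:EReal) * pdiv a b = pdiv (c*a) b := by
  unfold pdiv
  split_ifs with h1 h2 h3 h4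
  · rw [← EReal.coe_mul, mul_div_assoc]
  · exact EReal.coe_mul_top_of_pos hc
  · exact absurd (mul_pos hc h2) h3
  · nlinarith
  · exact mul_zero _

noncomputable def Tm (c a z : ℝ) : EReal := pdiv (c * (max a 0)^2) z

lemma Tm_nonneg (c a z : ℝ) (hc : 0 ≤ c) : 0 ≤ Tm c a z :=
  pdiv_nonneg (mul_nonneg hc (sq_nonneg _))

lemma ereal_key {c t s z w θ : ℝ} (hc : 0 ≤ c) (hz : 0 ≤ z) (hw : 0 ≤ w)
    (hθ0 : 0 ≤ θ) (hθ1 : θ ≤ 1) :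
    Tm c (θ*t+(1-θ)*s) (θ*z+(1-θ)*w) ≤
      (θ:EReal) * Tm c t z + ((1-θ:ℝ):EReal) * Tm c s w := by
  rcases eq_or_lt_of_le hθ0 with rfl | hθ
  · have e1 : (0:ℝ)*t+(1-0)*s = s := by ring
    have e2 : (0:ℝ)*z+(1-0)*w = w := by ring
    rw [e1, e2]
    norm_num
  rcases eq_or_lt_of_le hθ1 with rfl | hθ1'
  · have e1 : (1:ℝ)*t+(1-1)*s = t := by ring
    have e2 : (1:ℝ)*z+(1-1)*w = z := by ring
    rw [e1, e2]
    norm_num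
  -- 0 < θ < 1
  by_cases hPt : Tm c t z = ⊤
  · rw [hPt]
    have h1 : (θ:EReal) * ⊤ = ⊤ := EReal.coe_mul_top_of_pos (by exact_mod_cast hθ)
    rw [h1, EReal.top_add_of_ne_bot]
    · exact le_top
    · have h0 : (0:EReal) ≤ ((1-θ:ℝ):EReal) * Tm c s w :=
        mul_nonneg (by exact_mod_cast (by linarith : (0:ℝ) ≤ 1-θ)) (Tm_nonneg _ _ _ hc)
      exact (lt_of_lt_of_le EReal.bot_lt_zero h0).ne'
  by_cases hPs : Tm c s w = ⊤
  · rw [hPs]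
    have h1 : ((1-θ:ℝ):EReal) * ⊤ = ⊤ := EReal.coe_mul_top_of_pos (by exact_mod_cast (by linarith : (0:ℝ) < 1-θ))
    rw [h1, EReal.add_top_of_ne_bot]
    · exact le_top
    · have h0 : (0:EReal) ≤ (θ:EReal) * Tm c t z :=
        mul_nonneg (by exact_mod_cast hθ0) (Tm_nonneg _ _ _ hc)
      exact (lt_of_lt_of_le EReal.bot_lt_zero h0).ne'
  -- both finite
  have hA : (0:ℝ) ≤ c * (max t 0)^2 := mul_nonneg hc (sq_nonneg _)
  have hB : (0:ℝ) ≤ c * (max s 0)^2 := mul_nonneg hc (sq_nonneg _)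
  have ht' : 0 < z ∨ c * (max t 0)^2 = 0 := pdiv_ne_top hA hPt
  have hs' : 0 < w ∨ c * (max s 0)^2 = 0 := pdiv_ne_top hB hPs
  -- convert the condition to the real_key form when c > 0
  rcases eq_or_lt_of_le hc with rfl | hc'
  · have e : ∀ a z : ℝ, Tm 0 a z = 0 := fun a z => by
      unfold Tm; rw [zero_mul, pdiv_zero]
    rw [e, e, e, mul_zero, mul_zero, add_zero]
  have ht'' : 0 < z ∨ t ≤ 0 := by
    rcases ht' with h | h
    · exact Or.inl h
    · right
      by_contra hpos
      push_neg at hpos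
      have : max t 0 = t := max_eq_left hpos.le
      rw [this] at h
      have := mul_pos hc' (pow_pos hpos 2)
      linarith
  have hs'' : 0 < w ∨ s ≤ 0 := by
    rcases hs' with h | h
    · exact Or.inl h
    · right
      by_contra hpos
      push_neg at hpos
      have : max s 0 = s := max_eq_left hpos.le
      rw [this] at h
      have := mul_pos hc' (pow_pos hpos 2)
      linarith
  have hcomb : 0 < θ*z+(1-θ)*w ∨ c * (max (θ*t+(1-θ)*s) 0)^2 = 0 := by
    rcases ht'' with h | h
    · left; nlinarith
    · rcases hs'' with h2 | h2
      · left; nlinarith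
      · right
        have : θ*t+(1-θ)*s ≤ 0 := by nlinarith
        rw [max_eq_right this]
        ring
  unfold Tm
  rw [pdiv_eq_coe hcomb, pdiv_eq_coe ht', pdiv_eq_coe hs',
    ← EReal.coe_mul, ← EReal.coe_mul, ← EReal.coe_add, EReal.coe_le_coe_iff]
  exact real_key hc hz hw hθ hθ1' ht'' hs''

lemma pdiv_mul {c : ℝ} (hc : 0 ≤ c) (a b : ℝ) : pdiv a b * (c:EReal) = pdiv (c*a) b := by
  rcases eq_or_lt_of_le hc with rfl | hc'
  · rw [EReal.coe_zero, mul_zero, zero_mul, pdiv_zero]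
  · rw [mul_comm, mul_pdiv hc']

lemma f2_mul {d : ℝ} (hd : 0 < d) (z₁ z₂ a b : ℝ) :
    (d:EReal) * f2 z₁ z₂ a b = max (Tm d (a-b) z₁) (Tm d (b-a) z₂) := by
  unfold f2 Tm
  by_cases h : b ≤ a
  · rw [if_pos h, mul_pdiv hd]
    rw [max_eq_left (by linarith : (0:ℝ) ≤ a - b), max_eq_right (by linarith : b - a ≤ (0:ℝ))]
    rw [(by norm_num : d * (0:ℝ)^2 = 0), pdiv_zero]
    exact (max_eq_left (pdiv_nonneg (by positivity))).symm
  · push_neg at h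
    rw [if_neg (not_le.2 h), mul_pdiv hd]
    rw [max_eq_right (by linarith : a - b ≤ (0:ℝ)), max_eq_left (by linarith : (0:ℝ) ≤ b - a)]
    rw [(by norm_num : d * (0:ℝ)^2 = 0), pdiv_zero]
    rw [(by ring : (a-b)^2 = (b-a)^2)]
    exact (max_eq_right (pdiv_nonneg (by positivity))).symm

lemma max_add_ereal (A B C : EReal) : max A B + C = max (A + C) (B + C) := by
  rcases le_total A B with h | h
  · rw [max_eq_right h, max_eq_right (add_le_add h (le_refl C))]
  · rw [max_eq_left h, max_eq_left (add_le_add h (le_refl C))]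

lemma g2_eq {d₁ d₂ : ℝ} (hd₁ : 0 < d₁) (hd₂ : 0 < d₂) (hdd : 1 ≤ d₁ * d₂)
    (z₁ z₂ x₁ x₂ : ℝ) (hx₁ : 0 ≤ x₁) (hx₂ : 0 ≤ x₂) :
    g2 d₁ d₂ z₁ z₂ x₁ x₂ =
      max (max (Tm d₁ (x₁-x₂/d₁) z₁ + Tm (d₂-1/d₁) x₂ z₂)
               (Tm d₁ (x₂/d₁-x₁) z₂ + Tm (d₂-1/d₁) x₂ z₂))
          (max (Tm d₂ (x₁/d₂-x₂) z₁ + Tm (d₁-1/d₂) x₁ z₁)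
               (Tm d₂ (x₂-x₁/d₂) z₂ + Tm (d₁-1/d₂) x₁ z₁)) := by
  have hc₂ : (0:ℝ) ≤ d₂ - 1/d₁ := by
    rw [sub_nonneg, div_le_iff₀ hd₁]
    linarith [hdd]
  have hc₁ : (0:ℝ) ≤ d₁ - 1/d₂ := by
    rw [sub_nonneg, div_le_iff₀ hd₂]
    nlinarith
  have e₂ : pdiv (x₂^2) z₂ * ((d₂ - 1/d₁ : ℝ) : EReal) = Tm (d₂-1/d₁) x₂ z₂ := by
    rw [pdiv_mul hc₂]
    unfold Tm
    rw [max_eq_left hx₂]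
  have e₁ : pdiv (x₁^2) z₁ * ((d₁ - 1/d₂ : ℝ) : EReal) = Tm (d₁-1/d₂) x₁ z₁ := by
    rw [pdiv_mul hc₁]
    unfold Tm
    rw [max_eq_left hx₁]
  unfold g2
  rw [f2_mul hd₁, f2_mul hd₂, e₁, e₂, max_add_ereal, max_add_ereal]

lemma step_lemma {c₁ c₂ t s t' s' z w z' w' θ : ℝ} (hc₁ : 0 ≤ c₁) (hc₂ : 0 ≤ c₂)
    (hz : 0 ≤ z) (hw : 0 ≤ w) (hz' : 0 ≤ z') (hw' : 0 ≤ w')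
    (hθ0 : 0 ≤ θ) (hθ1 : θ ≤ 1)
    {GP GQ : EReal} (hP : Tm c₁ t z + Tm c₂ t' z' ≤ GP) (hQ : Tm c₁ s w + Tm c₂ s' w' ≤ GQ) :
    Tm c₁ (θ*t+(1-θ)*s) (θ*z+(1-θ)*w) + Tm c₂ (θ*t'+(1-θ)*s') (θ*z'+(1-θ)*w') ≤
      (θ:EReal) * GP + ((1-θ:ℝ):EReal) * GQ := by
  have hθ0' : (0:EReal) ≤ (θ:EReal) := by exact_mod_cast hθ0
  have hθ1'' : (0:EReal) ≤ ((1-θ:ℝ):EReal) := by exact_mod_cast (by linarith : (0:ℝ) ≤ 1-θ)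
  calc Tm c₁ (θ*t+(1-θ)*s) (θ*z+(1-θ)*w) + Tm c₂ (θ*t'+(1-θ)*s') (θ*z'+(1-θ)*w')
      ≤ ((θ:EReal) * Tm c₁ t z + ((1-θ:ℝ):EReal) * Tm c₁ s w)
        + ((θ:EReal) * Tm c₂ t' z' + ((1-θ:ℝ):EReal) * Tm c₂ s' w') :=
        add_le_add (ereal_key hc₁ hz hw hθ0 hθ1) (ereal_key hc₂ hz' hw' hθ0 hθ1)
    _ = (θ:EReal) * (Tm c₁ t z + Tm c₂ t' z') + ((1-θ:ℝ):EReal) * (Tm c₁ s w + Tm c₂ s' w') := by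
        rw [add_add_add_comm,
          ← EReal.left_distrib_of_nonneg (Tm_nonneg _ _ _ hc₁) (Tm_nonneg _ _ _ hc₂),
          ← EReal.left_distrib_of_nonneg (Tm_nonneg _ _ _ hc₁) (Tm_nonneg _ _ _ hc₂)]
    _ ≤ (θ:EReal) * GP + ((1-θ:ℝ):EReal) * GQ :=
        add_le_add (mul_le_mul_of_nonneg_left hP hθ0') (mul_le_mul_of_nonneg_left hQ hθ1'')

/-- `g(·,·;d₁,d₂)` is convex on `[0,1]² × ℝ₊²` for any `d₁,d₂ > 0` with `d₁d₂ ≥ 1`. -/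
theorem g2_convex (d₁ d₂ : ℝ) (hd₁ : 0 < d₁) (hd₂ : 0 < d₂) (hdd : 1 ≤ d₁ * d₂) :
    ∀ z₁ z₂ x₁ x₂ w₁ w₂ u₁ u₂ θ : ℝ,
      z₁ ∈ Set.Icc (0:ℝ) 1 → z₂ ∈ Set.Icc (0:ℝ) 1 → 0 ≤ x₁ → 0 ≤ x₂ →
      w₁ ∈ Set.Icc (0:ℝ) 1 → w₂ ∈ Set.Icc (0:ℝ) 1 → 0 ≤ u₁ → 0 ≤ u₂ →
      0 ≤ θ → θ ≤ 1 →
      g2 d₁ d₂ (θ*z₁ + (1-θ)*w₁) (θ*z₂ + (1-θ)*w₂) (θ*x₁ + (1-θ)*u₁) (θ*x₂ + (1-θ)*u₂)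
        ≤ (θ : EReal) * g2 d₁ d₂ z₁ z₂ x₁ x₂ + ((1-θ : ℝ) : EReal) * g2 d₁ d₂ w₁ w₂ u₁ u₂ := by
  intro z₁ z₂ x₁ x₂ w₁ w₂ u₁ u₂ θ hz₁ hz₂ hx₁ hx₂ hw₁ hw₂ hu₁ hu₂ hθ0 hθ1
  have hθ1' : (0:ℝ) ≤ 1 - θ := by linarith
  have hX₁ : 0 ≤ θ*x₁ + (1-θ)*u₁ := by positivity
  have hX₂ : 0 ≤ θ*x₂ + (1-θ)*u₂ := by positivity
  rw [g2_eq hd₁ hd₂ hdd _ _ _ _ hX₁ hX₂, g2_eq hd₁ hd₂ hdd _ _ _ _ hx₁ hx₂,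
    g2_eq hd₁ hd₂ hdd _ _ _ _ hu₁ hu₂]
  apply max_le <;> apply max_le
  · rw [show (θ*x₁+(1-θ)*u₁) - (θ*x₂+(1-θ)*u₂)/d₁ = θ*(x₁-x₂/d₁)+(1-θ)*(u₁-u₂/d₁) by ring]
    exact step_lemma hd₁.le (by rw [sub_nonneg, div_le_iff₀ hd₁]; linarith) hz₁.1 hw₁.1 hz₂.1 hw₂.1
      hθ0 hθ1 ((le_max_left _ _).trans (le_max_left _ _)) ((le_max_left _ _).trans (le_max_left _ _))
  · rw [show (θ*x₂+(1-θ)*u₂)/d₁ - (θ*x₁+(1-θ)*u₁) = θ*(x₂/d₁-x₁)+(1-θ)*(u₂/d₁-u₁) by ring]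
    exact step_lemma hd₁.le (by rw [sub_nonneg, div_le_iff₀ hd₁]; linarith) hz₂.1 hw₂.1 hz₂.1 hw₂.1
      hθ0 hθ1 ((le_max_right _ _).trans (le_max_left _ _)) ((le_max_right _ _).trans (le_max_left _ _))
  · rw [show (θ*x₁+(1-θ)*u₁)/d₂ - (θ*x₂+(1-θ)*u₂) = θ*(x₁/d₂-x₂)+(1-θ)*(u₁/d₂-u₂) by ring]
    exact step_lemma hd₂.le (by rw [sub_nonneg, div_le_iff₀ hd₂]; nlinarith) hz₁.1 hw₁.1 hz₁.1 hw₁.1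
      hθ0 hθ1 ((le_max_left _ _).trans (le_max_right _ _)) ((le_max_left _ _).trans (le_max_right _ _))
  · rw [show (θ*x₂+(1-θ)*u₂) - (θ*x₁+(1-θ)*u₁)/d₂ = θ*(x₂-x₁/d₂)+(1-θ)*(u₂-u₁/d₂) by ring]
    exact step_lemma hd₂.le (by rw [sub_nonneg, div_le_iff₀ hd₂]; nlinarith) hz₂.1 hw₂.1 hz₁.1 hw₁.1
      hθ0 hθ1 ((le_max_right _ _).trans (le_max_right _ _)) ((le_max_right _ _).trans (le_max_right _ _))
end

section
/- Let z₁ ≥ z₂ with z₁, z₂ ∈ (0,1], let x₁, x₂ ≥ 0, and d₁, d₂ > 0 with d₁d₂ ≥ 1. If d₁x₁ ≥ x₂ then the maximum defining g equals (d₁x₁² - 2x₁x₂ + x₂²/d₁)/z₁ + (x₂²/z₂)(d₂ - 1/d₁), and if d₁x₁ ≤ x₂ then it equals (d₁x₁² - 2x₁x₂ + d₂x₂²)/z₂. That is, when z₁ ≥ z₂ the first term in the max defining g attains the maximum. -/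
lemma pdiv_of_pos' (a b : ℝ) (hb : 0 < b) : pdiv a b = ((a / b : ℝ) : EReal) := by
  simp [pdiv, hb]

lemma ereal_max_coe (A B C : ℝ) (h1 : B ≤ A) (h2 : A = C) :
    (A : EReal) ⊔ (B : EReal) = (C : EReal) := by
  rw [max_eq_left (EReal.coe_le_coe_iff.mpr h1), h2]

set_option maxHeartbeats 1000000
/-- Explicit expression of `g` when `z₁ ≥ z₂` (the first term attains the maximum). -/
theorem g2_explicit_z1_ge_z2 (d₁ d₂ z₁ z₂ x₁ x₂ : ℝ)
    (hd₁ : 0 < d₁) (hd₂ : 0 < d₂) (hdd : 1 ≤ d₁ * d₂)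
    (hz₂ : 0 < z₂) (hz : z₂ ≤ z₁) (hz₁ : z₁ ≤ 1)
    (hx₁ : 0 ≤ x₁) (hx₂ : 0 ≤ x₂) :
    (x₂ ≤ d₁ * x₁ →
      g2 d₁ d₂ z₁ z₂ x₁ x₂
        = (((d₁ * x₁^2 - 2 * x₁ * x₂ + x₂^2 / d₁) / z₁
            + (x₂^2 / z₂) * (d₂ - 1/d₁) : ℝ) : EReal)) ∧
    (d₁ * x₁ ≤ x₂ →
      g2 d₁ d₂ z₁ z₂ x₁ x₂
        = (((d₁ * x₁^2 - 2 * x₁ * x₂ + d₂ * x₂^2) / z₂ : ℝ) : EReal)) := by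
  have hz₁' : 0 < z₁ := lt_of_lt_of_le hz₂ hz
  constructor
  · intro h
    have h1 : x₂ / d₁ ≤ x₁ := by rw [div_le_iff₀ hd₁]; linarith [mul_comm d₁ x₁]
    unfold g2 f2
    rw [if_pos h1]
    by_cases h2 : x₂ ≤ x₁ / d₂
    · rw [if_pos h2]
      simp only [pdiv_of_pos' _ _ hz₁', pdiv_of_pos' _ _ hz₂]
      norm_cast
      apply ereal_max_coe
      · rw [← sub_nonneg]
        have e : d₁ * ((x₁ - x₂ / d₁) ^ 2 / z₁) + x₂ ^ 2 / z₂ * (d₂ - 1 / d₁)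
            - (d₂ * ((x₁ / d₂ - x₂) ^ 2 / z₁) + x₁ ^ 2 / z₁ * (d₁ - 1 / d₂))
            = x₂^2 * (d₁*d₂ - 1) * (z₁ - z₂) / (d₁ * z₁ * z₂) := by
          field_simp; ring
        rw [e]
        have hn : 0 ≤ x₂^2 * (d₁*d₂ - 1) * (z₁ - z₂) :=
          mul_nonneg (mul_nonneg (sq_nonneg _) (by linarith)) (by linarith)
        positivity
      · field_simp; ring
    · rw [if_neg h2]
      simp only [pdiv_of_pos' _ _ hz₁', pdiv_of_pos' _ _ hz₂]
      norm_cast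
      apply ereal_max_coe
      · rw [← sub_nonneg]
        have e : d₁ * ((x₁ - x₂ / d₁) ^ 2 / z₁) + x₂ ^ 2 / z₂ * (d₂ - 1 / d₁)
            - (d₂ * ((x₁ / d₂ - x₂) ^ 2 / z₂) + x₁ ^ 2 / z₁ * (d₁ - 1 / d₂))
            = (2*x₁*x₂*d₁*d₂ - x₁^2*d₁ - x₂^2*d₂) * (z₁ - z₂) / (d₁ * d₂ * z₁ * z₂) := by
          field_simp; ring
        rw [e]
        have h2' : x₁ ≤ d₂ * x₂ := by
          rw [not_le, div_lt_iff₀ hd₂] at h2; nlinarith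
        have hn : 0 ≤ 2*x₁*x₂*d₁*d₂ - x₁^2*d₁ - x₂^2*d₂ := by nlinarith
        have hn2 : 0 ≤ (2*x₁*x₂*d₁*d₂ - x₁^2*d₁ - x₂^2*d₂) * (z₁ - z₂) :=
          mul_nonneg hn (by linarith)
        positivity
      · field_simp; ring
  · intro h
    unfold g2 f2
    split_ifs with hc hd hd
    all_goals simp only [pdiv_of_pos' _ _ hz₁', pdiv_of_pos' _ _ hz₂]
    all_goals norm_cast
    all_goals apply ereal_max_coe
    rotate_right 2
    · -- (¬hc, ¬hd) inequality
      rw [← sub_nonneg]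
      have e : d₁ * ((x₁ - x₂ / d₁) ^ 2 / z₂) + x₂ ^ 2 / z₂ * (d₂ - 1 / d₁)
          - (d₂ * ((x₁ / d₂ - x₂) ^ 2 / z₂) + x₁ ^ 2 / z₁ * (d₁ - 1 / d₂))
          = x₁^2 * (d₁*d₂ - 1) * (z₁ - z₂) / (d₂ * z₁ * z₂) := by
        field_simp; ring
      rw [e]
      have hn : 0 ≤ x₁^2 * (d₁*d₂ - 1) * (z₁ - z₂) :=
        mul_nonneg (mul_nonneg (sq_nonneg _) (by linarith)) (by linarith)
      positivity
    · field_simp; ring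
    rotate_right 2
    · -- (¬hc, hd) : contradiction
      have heq : x₂ = d₁ * x₁ := by
        rw [le_div_iff₀ hd₂] at hd; nlinarith [mul_nonneg hx₂ (sub_nonneg.2 hdd)]
      subst heq
      exact absurd (le_of_eq (by field_simp)) hc
    · have heq : x₂ = d₁ * x₁ := by
        rw [le_div_iff₀ hd₂] at hd; nlinarith [mul_nonneg hx₂ (sub_nonneg.2 hdd)]
      subst heq
      exact absurd (le_of_eq (by field_simp : d₁ * x₁ / d₁ = x₁)) hc
    all_goals (have heq : x₂ = d₁ * x₁ := by
                 rw [div_le_iff₀ hd₁] at hc; nlinarith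
               subst heq)
    · -- (hc, hd) inequality : degenerate, both sides 0
      have h0 : x₁ * (d₁*d₂ - 1) = 0 := by
        rw [le_div_iff₀ hd₂] at hd
        exact le_antisymm (by nlinarith) (mul_nonneg hx₁ (by linarith))
      have e1 : d₂ * ((x₁/d₂ - d₁*x₁)^2/z₁) + x₁^2/z₁ * (d₁ - 1/d₂)
          = (x₁*(d₁*d₂-1))^2/(d₂*z₁) + x₁*(x₁*(d₁*d₂-1))/(d₂*z₁) := by
        field_simp; ring
      have e2 : d₁ * ((x₁ - d₁*x₁/d₁)^2/z₁) + (d₁*x₁)^2/z₂ * (d₂ - 1/d₁)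
          = d₁*x₁*(x₁*(d₁*d₂-1))/z₂ := by
        field_simp; ring
      rw [e1, e2, h0]
      norm_num
    · field_simp; ring
    · -- (hc, ¬hd) inequality
      rw [← sub_nonneg]
      have e : d₁ * ((x₁ - d₁*x₁/d₁)^2/z₁) + (d₁*x₁)^2/z₂ * (d₂ - 1/d₁)
          - (d₂ * ((x₁/d₂ - d₁*x₁)^2/z₂) + x₁^2/z₁ * (d₁ - 1/d₂))
          = x₁^2 * (d₁*d₂ - 1) * (z₁ - z₂) / (d₂ * z₁ * z₂) := by
        field_simp; ring
      rw [e]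
      have hn : 0 ≤ x₁^2 * (d₁*d₂ - 1) * (z₁ - z₂) :=
        mul_nonneg (mul_nonneg (sq_nonneg _) (by linarith)) (by linarith)
      positivity
    · field_simp; ring
end

section
/- A point (z,x,s) ∈ [0,1]² × ℝ₊³ satisfies f(z,x) ≤ s if and only if there exist v, w ∈ ℝ such that v ≥ x₁ - x₂, v² ≤ s·z₁, w ≥ x₂ - x₁, and w² ≤ s·z₂. -/
lemma pdiv_le_iff (a b s : ℝ) (ha : 0 ≤ a) (hb : 0 ≤ b) (hs : 0 ≤ s) :
    pdiv a b ≤ (s : EReal) ↔ a ≤ s * b := by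
  unfold pdiv
  rcases lt_or_eq_of_le hb with hb' | hb'
  · rw [if_pos hb', EReal.coe_le_coe_iff, div_le_iff₀ hb']
  · rw [if_neg (by rw [← hb']; exact lt_irrefl 0), ← hb', mul_zero]
    rcases lt_or_eq_of_le ha with ha' | ha'
    · rw [if_pos ha']
      simp [not_le_of_gt ha']
    · rw [if_neg (by rw [← ha']; exact lt_irrefl 0), ← ha']
      simp [hs]

/-- Conic quadratic extended formulation of `conv(X²)`: `f(z,x) ≤ s` iff the
system `v ≥ x₁-x₂, v² ≤ sz₁, w ≥ x₂-x₁, w² ≤ sz₂` is feasible. -/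
theorem f2_extended_formulation (z₁ z₂ x₁ x₂ s : ℝ)
    (hz₁ : z₁ ∈ Set.Icc (0:ℝ) 1) (hz₂ : z₂ ∈ Set.Icc (0:ℝ) 1)
    (hx₁ : 0 ≤ x₁) (hx₂ : 0 ≤ x₂) (hs : 0 ≤ s) :
    f2 z₁ z₂ x₁ x₂ ≤ (s : EReal) ↔
      ∃ v w : ℝ, x₁ - x₂ ≤ v ∧ v^2 ≤ s * z₁ ∧ x₂ - x₁ ≤ w ∧ w^2 ≤ s * z₂ := by
  unfold f2
  by_cases h : x₂ ≤ x₁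
  · rw [if_pos h, pdiv_le_iff _ _ _ (sq_nonneg _) hz₁.1 hs]
    constructor
    · intro hle
      exact ⟨x₁ - x₂, 0, le_refl _, hle, by linarith,
        by simpa using mul_nonneg hs hz₂.1⟩
    · rintro ⟨v, w, hv1, hv2, -, -⟩
      calc (x₁ - x₂)^2 ≤ v^2 := pow_le_pow_left₀ (by linarith) hv1 2
        _ ≤ s * z₁ := hv2
  · rw [if_neg h, pdiv_le_iff _ _ _ (sq_nonneg _) hz₂.1 hs]
    push_neg at h
    constructor
    · intro hle
      refine ⟨0, x₂ - x₁, by linarith, by simpa using mul_nonneg hs hz₁.1,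
        le_refl _, ?_⟩
      calc (x₂ - x₁)^2 = (x₁ - x₂)^2 := by ring
        _ ≤ s * z₂ := hle
    · rintro ⟨v, w, -, -, hw1, hw2⟩
      calc (x₁ - x₂)^2 = (x₂ - x₁)^2 := by ring
        _ ≤ w^2 := pow_le_pow_left₀ (by linarith) hw1 2
        _ ≤ s * z₂ := hw2
end

section
/- Every point of the set X² = {(z,x,s) ∈ {0,1}² × ℝ₊³ : (x₁-x₂)² ≤ s, x₁(1-z₁) = 0, x₂(1-z₂) = 0} satisfies the inequality f(z,x) ≤ s, where f(z,x) = (x₁-x₂)²/z₁ if x₁ ≥ x₂ and (x₁-x₂)²/z₂ if x₁ ≤ x₂ (with 0/0 = 0 and a/0 = ∞ for a > 0). -/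
/-- Every point of `X²` satisfies `f(z,x) ≤ s`. -/
theorem f2_valid_on_X2 (z₁ z₂ x₁ x₂ s : ℝ)
    (hz₁ : z₁ = 0 ∨ z₁ = 1) (hz₂ : z₂ = 0 ∨ z₂ = 1)
    (hx₁ : 0 ≤ x₁) (hx₂ : 0 ≤ x₂) (hs : 0 ≤ s)
    (hq : (x₁ - x₂)^2 ≤ s)
    (hc₁ : x₁ * (1 - z₁) = 0) (hc₂ : x₂ * (1 - z₂) = 0) :
    f2 z₁ z₂ x₁ x₂ ≤ (s : EReal) := by
  unfold f2
  rcases le_or_gt x₂ x₁ with h | h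
  · rw [if_pos h]
    rcases hz₁ with h0 | h0
    · have hx1 : x₁ = 0 := by nlinarith
      have hx2 : x₂ = 0 := le_antisymm (hx1 ▸ h) hx₂
      simp only [pdiv, hx1, hx2, h0, sub_zero, lt_irrefl, if_false]
      norm_num
      exact hs
    · simp only [pdiv, h0, zero_lt_one, if_true, div_one]
      exact_mod_cast hq
  · rw [if_neg (not_le.mpr h)]
    rcases hz₂ with h0 | h0
    · have hx2 : x₂ = 0 := by nlinarith
      linarith
    · simp only [pdiv, h0, zero_lt_one, if_true, div_one]
      exact_mod_cast hq
end

section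
/- Let d₁, d₂ > 0 with d₁d₂ ≥ 1. Every point (z,x,s) of Z² = {(z,x,s) ∈ {0,1}² × ℝ₊³ : d₁x₁² - 2x₁x₂ + d₂x₂² ≤ s, x₁(1-z₁)=0, x₂(1-z₂)=0} satisfies the valid inequality d₁·f(z₁,z₂,x₁,x₂/d₁) + (x₂²/z₂)(d₂ - 1/d₁) ≤ s. -/
/-- The inequality `d₁·f(z₁,z₂,x₁,x₂/d₁) + (x₂²/z₂)(d₂-1/d₁) ≤ s` is valid for `Z²`. -/
theorem valid_inequality_Z2 (d₁ d₂ z₁ z₂ x₁ x₂ s : ℝ)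
    (hd₁ : 0 < d₁) (hd₂ : 0 < d₂) (hdd : 1 ≤ d₁ * d₂)
    (hz₁ : z₁ = 0 ∨ z₁ = 1) (hz₂ : z₂ = 0 ∨ z₂ = 1)
    (hx₁ : 0 ≤ x₁) (hx₂ : 0 ≤ x₂) (hs : 0 ≤ s)
    (hq : d₁ * x₁^2 - 2 * x₁ * x₂ + d₂ * x₂^2 ≤ s)
    (hc₁ : x₁ * (1 - z₁) = 0) (hc₂ : x₂ * (1 - z₂) = 0) :
    (d₁ : EReal) * f2 z₁ z₂ x₁ (x₂ / d₁)
      + pdiv (x₂^2) z₂ * ((d₂ - 1/d₁ : ℝ) : EReal) ≤ (s : EReal) := by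
  have hd₁' : d₁ ≠ 0 := ne_of_gt hd₁
  rcases hz₂ with rfl | rfl
  · -- z₂ = 0, so x₂ = 0
    have hx2 : x₂ = 0 := by nlinarith [hc₂]
    subst hx2
    rcases hz₁ with rfl | rfl
    · -- z₁ = 0, x₁ = 0
      have hx1 : x₁ = 0 := by nlinarith [hc₁]
      subst hx1
      simp [f2, pdiv]
      exact_mod_cast hs
    · simp only [f2, pdiv, zero_div, lt_irrefl, if_false, lt_self_iff_false]
      rw [if_pos hx₁]
      have h2 : ¬ (0:ℝ) < (0:ℝ)^2 := by norm_num
      rw [if_pos one_pos, if_neg h2]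
      have : ((x₁ - 0)^2/1 : ℝ) = x₁^2 := by ring
      rw [this, zero_mul, add_zero, ← EReal.coe_mul, EReal.coe_le_coe_iff]
      nlinarith
  · -- z₂ = 1
    rcases hz₁ with rfl | rfl
    · -- z₁ = 0, x₁ = 0
      have hx1 : x₁ = 0 := by nlinarith [hc₁]
      subst hx1
      rcases eq_or_lt_of_le hx₂ with h0 | h0
      · rw [← h0]
        simp [f2, pdiv]
        exact_mod_cast hs
      · have hbr : ¬ (x₂/d₁ ≤ (0:ℝ)) := not_le.mpr (by positivity)
        simp only [f2, pdiv, if_neg hbr, if_pos one_pos]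
        rw [← EReal.coe_mul, ← EReal.coe_mul, ← EReal.coe_add, EReal.coe_le_coe_iff]
        have : d₁ * ((0 - x₂/d₁)^2/1) + x₂^2/1 * (d₂ - 1/d₁) = d₂ * x₂^2 := by
          field_simp; ring
        rw [this]; nlinarith
    · -- z₁ = 1, z₂ = 1
      have hval : f2 1 1 x₁ (x₂/d₁) = (((x₁ - x₂/d₁)^2 : ℝ) : EReal) := by
        simp only [f2, pdiv, if_pos one_pos]
        split_ifs <;> norm_num
      rw [hval]
      simp only [pdiv, if_pos one_pos]
      rw [← EReal.coe_mul, ← EReal.coe_mul, ← EReal.coe_add, EReal.coe_le_coe_iff]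
      have : d₁ * (x₁ - x₂/d₁)^2 + x₂^2/1 * (d₂ - 1/d₁)
          = d₁ * x₁^2 - 2*x₁*x₂ + d₂ * x₂^2 := by field_simp; ring
      rw [this]; exact hq
end

section
/- Let n = 2, Q a symmetric 2×2 M-matrix with Q₁₂ < 0 written as Q₁₁ = |Q₁₂|d₁, Q₂₂ = |Q₁₂|d₂ with d₁d₂ ≥ 1, d₁,d₂ > 0. For fixed z ∈ (0,1]² and x ∈ ℝ₊², the function d ↦ g(z₁,z₂,x₁,x₂;d₁,d₂) restricted to the feasible set {d₁d₂ ≥ 1, d₁,d₂ ≥ 0} is concave in (d₁,d₂). -/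
set_option maxHeartbeats 1000000


/-- For fixed `z₁ ≥ z₂ > 0` and `x ∈ ℝ₊²`, the strengthened pairwise term
`g(z,x;d₁,d₂)` is concave in the parameters `(d₁,d₂)` over the feasible set
`{d₁d₂ ≥ 1, d₁,d₂ ≥ 0}`. -/
theorem g2_concave_in_d (z₁ z₂ x₁ x₂ : ℝ)
    (hz₂ : 0 < z₂) (hz : z₂ ≤ z₁) (hz₁ : z₁ ≤ 1)
    (hx₁ : 0 ≤ x₁) (hx₂ : 0 ≤ x₂) :
    ConcaveOn ℝ {d : ℝ × ℝ | 1 ≤ d.1 * d.2 ∧ 0 ≤ d.1 ∧ 0 ≤ d.2}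
      (fun d : ℝ × ℝ =>
        d.1 * x₁^2 / z₁ + d.2 * x₂^2 / z₂ +
          (if x₂ ≤ d.1 * x₁ then
            -2 * x₁ * x₂ / z₁ - (x₂^2 / d.1) * (1/z₂ - 1/z₁)
          else
            -2 * x₁ * x₂ / z₂ + d.1 * x₁^2 * (1/z₂ - 1/z₁))) := by
  have hz₁pos : 0 < z₁ := lt_of_lt_of_le hz₂ hz
  set c : ℝ := 1/z₂ - 1/z₁ with hc
  have hc0 : 0 ≤ c := by
    have h1 : 1/z₁ ≤ 1/z₂ := one_div_le_one_div_of_le hz₂ hz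
    simp only [hc]; linarith
  -- key supporting-line inequality for the piecewise part
  have key : ∀ s t : ℝ, 0 < s → 0 < t →
      (if x₂ ≤ s * x₁ then -2 * x₁ * x₂ / z₁ - x₂ ^ 2 / s * c
        else -2 * x₁ * x₂ / z₂ + s * x₁ ^ 2 * c) ≤
      (if x₂ ≤ t * x₁ then -2 * x₁ * x₂ / z₁ - x₂ ^ 2 / t * c
        else -2 * x₁ * x₂ / z₂ + t * x₁ ^ 2 * c) +
      (if x₂ ≤ t * x₁ then c * x₂ ^ 2 / t ^ 2 else c * x₁ ^ 2) * (s - t) := by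
    intro s t hs ht
    by_cases hts : x₂ ≤ t * x₁ <;> by_cases hss : x₂ ≤ s * x₁ <;>
      simp only [hts, hss, if_true, if_false]
    · -- both in branch 1
      have e : (-2 * x₁ * x₂ / z₁ - x₂ ^ 2 / t * c + c * x₂ ^ 2 / t ^ 2 * (s - t))
          - (-2 * x₁ * x₂ / z₁ - x₂ ^ 2 / s * c) = c * x₂ ^ 2 * (s - t) ^ 2 / (s * t ^ 2) := by
        field_simp
        ring
      nlinarith [div_nonneg (mul_nonneg (mul_nonneg hc0 (sq_nonneg x₂)) (sq_nonneg (s - t)))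
        (le_of_lt (mul_pos hs (pow_pos ht 2)))]
    · -- t in branch 1, s in branch 2
      push_neg at hss
      have hx₂pos : 0 < x₂ := lt_of_le_of_lt (mul_nonneg hs.le hx₁) hss
      have hx₁pos : 0 < x₁ := by nlinarith
      have hst : s < t := by nlinarith
      have e : (-2 * x₁ * x₂ / z₁ - x₂ ^ 2 / t * c + c * x₂ ^ 2 / t ^ 2 * (s - t))
          - (-2 * x₁ * x₂ / z₂ + s * x₁ ^ 2 * c)
          = c * (x₁ * t - x₂) * (2 * x₂ * t - s * (x₁ * t + x₂)) / t ^ 2 := by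
        simp only [hc]
        field_simp
        ring
      have h1 : 0 ≤ x₁ * t - x₂ := by linarith [mul_comm t x₁]
      have h2 : 0 ≤ 2 * x₂ * t - s * (x₁ * t + x₂) := by nlinarith
      nlinarith [div_nonneg (mul_nonneg (mul_nonneg hc0 h1) h2) (sq_nonneg t)]
    · -- t in branch 2, s in branch 1
      have e : (-2 * x₁ * x₂ / z₂ + t * x₁ ^ 2 * c + c * x₁ ^ 2 * (s - t))
          - (-2 * x₁ * x₂ / z₁ - x₂ ^ 2 / s * c)
          = c * (x₁ * s - x₂) ^ 2 / s := by
        simp only [hc]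
        field_simp
        ring
      nlinarith [div_nonneg (mul_nonneg hc0 (sq_nonneg (x₁ * s - x₂))) hs.le]
    · -- both in branch 2
      nlinarith [sq_nonneg x₁]
  constructor
  · -- convexity of the feasible set
    intro p hp q hq a b ha hb hab
    obtain ⟨hp1, hp2, hp3⟩ := hp
    obtain ⟨hq1, hq2, hq3⟩ := hq
    simp only [Set.mem_setOf_eq, Prod.fst_add, Prod.snd_add, Prod.smul_fst, Prod.smul_snd,
      smul_eq_mul]
    have hnn : 0 ≤ p.1 * q.2 + p.2 * q.1 :=
      add_nonneg (mul_nonneg hp2 hq3) (mul_nonneg hp3 hq2)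
    have h4 : 4 ≤ (p.1 * q.2 + p.2 * q.1) ^ 2 := by
      nlinarith [sq_nonneg (p.1 * q.2 - p.2 * q.1)]
    have huv : 2 ≤ p.1 * q.2 + p.2 * q.1 := by nlinarith [h4, hnn]
    refine ⟨?_, by positivity, by positivity⟩
    have h1 : 0 ≤ a * a * (p.1 * p.2 - 1) :=
      mul_nonneg (mul_nonneg ha ha) (by linarith)
    have h2 : 0 ≤ b * b * (q.1 * q.2 - 1) :=
      mul_nonneg (mul_nonneg hb hb) (by linarith)
    have h3 : 0 ≤ a * b * (p.1 * q.2 + p.2 * q.1 - 2) :=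
      mul_nonneg (mul_nonneg ha hb) (by linarith)
    have habsq : (a + b) ^ 2 = 1 := by rw [hab]; norm_num
    nlinarith [h1, h2, h3, habsq]
  · intro p hp q hq a b ha hb hab
    obtain ⟨hp1, hp2, hp3⟩ := hp
    obtain ⟨hq1, hq2, hq3⟩ := hq
    have hp1pos : 0 < p.1 := by nlinarith
    have hq1pos : 0 < q.1 := by nlinarith
    simp only [Prod.fst_add, Prod.snd_add, Prod.smul_fst, Prod.smul_snd, smul_eq_mul]
    set t : ℝ := a * p.1 + b * q.1 with htdef
    have htpos : 0 < t := by
      rcases eq_or_lt_of_le ha with h | h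
      · have hb1 : b = 1 := by linarith
        simp [htdef, ← h, hb1]
        exact hq1pos
      · have := mul_pos h hp1pos
        nlinarith [mul_nonneg hb hq1pos.le]
    have hP := key p.1 t hp1pos htpos
    have hQ := key q.1 t hq1pos htpos
    set It : ℝ := (if x₂ ≤ t * x₁ then -2 * x₁ * x₂ / z₁ - x₂ ^ 2 / t * c
        else -2 * x₁ * x₂ / z₂ + t * x₁ ^ 2 * c) with hIt
    set Ip : ℝ := (if x₂ ≤ p.1 * x₁ then -2 * x₁ * x₂ / z₁ - x₂ ^ 2 / p.1 * c
        else -2 * x₁ * x₂ / z₂ + p.1 * x₁ ^ 2 * c) with hIp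
    set Iq : ℝ := (if x₂ ≤ q.1 * x₁ then -2 * x₁ * x₂ / z₁ - x₂ ^ 2 / q.1 * c
        else -2 * x₁ * x₂ / z₂ + q.1 * x₁ ^ 2 * c) with hIq
    set Dt : ℝ := (if x₂ ≤ t * x₁ then c * x₂ ^ 2 / t ^ 2 else c * x₁ ^ 2) with hDt
    have hPa := mul_le_mul_of_nonneg_left hP ha
    have hQb := mul_le_mul_of_nonneg_left hQ hb
    have lin : t * x₁ ^ 2 / z₁ + (a * p.2 + b * q.2) * x₂ ^ 2 / z₂
        = a * (p.1 * x₁ ^ 2 / z₁ + p.2 * x₂ ^ 2 / z₂)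
          + b * (q.1 * x₁ ^ 2 / z₁ + q.2 * x₂ ^ 2 / z₂) := by
      rw [htdef]; ring
    have comb : a * (It + Dt * (p.1 - t)) + b * (It + Dt * (q.1 - t)) = It := by
      rw [htdef]
      linear_combination (It - Dt * (a * p.1 + b * q.1)) * hab
    linarith [hPa, hQb, lin, comb]
end

section
/- Suppose z_i, z_j ∈ (0,1], x_i, x_j ≥ 0, Γ_{ii}, Γ_{jj} > 0 with Γ_{ii}z_i ≥ x_i², Γ_{jj}z_j ≥ x_j², and x_i²/Γ_{ii} ≥ x_j²/Γ_{jj}. Then Γ_{jj} - x_j²/z_i ≥ 0, and the value d* = √((Γ_{jj} - x_j²/z_i)/(Γ_{ii} - x_i²/z_i)) (when Γ_{ii} - x_i²/z_i > 0) satisfies d*·x_i ≥ x_j. -/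
/-- Feasibility and consistency of the optimal separation parameter
`d* = √((Γⱼⱼ - xⱼ²/zᵢ)/(Γᵢᵢ - xᵢ²/zᵢ))`. -/
theorem optimal_separation_parameter (zi zj xi xj Γii Γjj : ℝ)
    (hzi : zi ∈ Set.Ioc (0:ℝ) 1) (hzj : zj ∈ Set.Ioc (0:ℝ) 1)
    (hxi : 0 ≤ xi) (hxj : 0 ≤ xj)
    (hΓii : 0 < Γii) (hΓjj : 0 < Γjj)
    (hpi : xi^2 ≤ Γii * zi) (hpj : xj^2 ≤ Γjj * zj)
    (hratio : xj^2 / Γjj ≤ xi^2 / Γii) :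
    0 ≤ Γjj - xj^2 / zi ∧
    (0 < Γii - xi^2 / zi →
      xj ≤ Real.sqrt ((Γjj - xj^2 / zi) / (Γii - xi^2 / zi)) * xi) := by
  obtain ⟨hzi0, hzi1⟩ := hzi
  have hxi2 : xi ^ 2 / Γii ≤ zi := by
    rw [div_le_iff₀ hΓii]; linarith
  have h1 : xj ^ 2 ≤ Γjj * zi := by
    have h := hratio.trans hxi2
    rw [div_le_iff₀ hΓjj] at h; linarith
  have h0 : 0 ≤ Γjj - xj ^ 2 / zi := by
    rw [sub_nonneg, div_le_iff₀ hzi0]; linarith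
  refine ⟨h0, fun hd => ?_⟩
  have key : xj ^ 2 ≤ (Γjj - xj ^ 2 / zi) / (Γii - xi ^ 2 / zi) * xi ^ 2 := by
    rw [div_mul_eq_mul_div, le_div_iff₀ hd]
    have hr : Γii * xj ^ 2 ≤ Γjj * xi ^ 2 := by
      have := (div_le_div_iff₀ hΓjj hΓii).mp hratio; linarith
    have hc : xj ^ 2 * (xi ^ 2 / zi) = xj ^ 2 / zi * xi ^ 2 := by ring
    nlinarith [hc]
  calc xj = Real.sqrt (xj ^ 2) := (Real.sqrt_sq hxj).symm
    _ ≤ Real.sqrt ((Γjj - xj ^ 2 / zi) / (Γii - xi ^ 2 / zi) * xi ^ 2) :=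
      Real.sqrt_le_sqrt key
    _ = Real.sqrt ((Γjj - xj ^ 2 / zi) / (Γii - xi ^ 2 / zi)) * xi := by
      rw [Real.sqrt_mul (div_nonneg h0 hd.le), Real.sqrt_sq hxi]
end

section
/- Let a₂ ∈ ℝ, b ∈ ℝ, c > 0, and consider ψ(z₂, x₂) = a₂z₂ + b·x₂ + c·x₂²/z₂ over z₂ ∈ [0,1], x₂ ≥ 0 (with conventions 0/0 = 0 and a/0 = ∞ for a > 0). If ψ attains a minimum, then it attains a minimum at a point with z₂ ∈ {0,1}. -/
/-- Scaling lemma: if `ψ(z₂,x₂) = a₂z₂ + bx₂ + c·x₂²/z₂` attains a minimum over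
`[0,1] × ℝ₊`, then it attains a minimum at a point with `z₂ ∈ {0,1}`. -/
theorem min_attained_at_binary_z (a₂ b c : ℝ) (hc : 0 < c)
    (ψ : ℝ → ℝ → EReal)
    (hψ : ∀ z₂ x₂ : ℝ, ψ z₂ x₂ = ((a₂ * z₂ + b * x₂ : ℝ) : EReal) + (c : EReal) * pdiv (x₂^2) z₂)
    (hmin : ∃ z₂ x₂ : ℝ, z₂ ∈ Set.Icc (0:ℝ) 1 ∧ 0 ≤ x₂ ∧
      ∀ w₂ u₂ : ℝ, w₂ ∈ Set.Icc (0:ℝ) 1 → 0 ≤ u₂ → ψ z₂ x₂ ≤ ψ w₂ u₂) :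
    ∃ z₂ x₂ : ℝ, z₂ ∈ Set.Icc (0:ℝ) 1 ∧ 0 ≤ x₂ ∧ (z₂ = 0 ∨ z₂ = 1) ∧
      ∀ w₂ u₂ : ℝ, w₂ ∈ Set.Icc (0:ℝ) 1 → 0 ≤ u₂ → ψ z₂ x₂ ≤ ψ w₂ u₂ := by
  obtain ⟨z, x, hz, hx, hopt⟩ := hmin
  rcases eq_or_lt_of_le hz.1 with h0 | h0
  · exact ⟨z, x, hz, hx, Or.inl h0.symm, hopt⟩
  rcases eq_or_lt_of_le hz.2 with h1 | h1
  · exact ⟨z, x, hz, hx, Or.inr h1, hopt⟩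
  -- now 0 < z < 1
  have hψ00 : ψ 0 0 = (0 : EReal) := by
    rw [hψ]
    simp [pdiv]
  have hψzx : ψ z x = ((a₂ * z + b * x + c * (x ^ 2 / z) : ℝ) : EReal) := by
    rw [hψ, pdiv, if_pos h0]
    push_cast
    ring
  set m : ℝ := a₂ * z + b * x + c * (x ^ 2 / z) with hm
  -- m ≤ 0
  have hle0 : m ≤ 0 := by
    have := hopt 0 0 (by constructor <;> norm_num) le_rfl
    rw [hψzx, hψ00] at this
    exact_mod_cast this
  -- m ≤ m / z
  have hscale : m ≤ m / z := by
    have hmem : (1:ℝ) ∈ Set.Icc (0:ℝ) 1 := by constructor <;> norm_num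
    have hxz : 0 ≤ x / z := div_nonneg hx h0.le
    have := hopt 1 (x / z) hmem hxz
    rw [hψzx, hψ] at this
    rw [pdiv, if_pos one_pos] at this
    have hrhs : ((a₂ * 1 + b * (x / z) : ℝ) : EReal) + (c : EReal) * (((x / z) ^ 2 / 1 : ℝ) : EReal)
        = ((m / z : ℝ) : EReal) := by
      rw [← EReal.coe_mul, ← EReal.coe_add]
      congr 1
      field_simp [hm]
      rw [hm]
      field_simp
    rw [hrhs] at this
    exact_mod_cast this
  have hge0 : 0 ≤ m := by
    have h2 : m * z ≤ m := (le_div_iff₀ h0).mp hscale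
    nlinarith
  have hm0 : m = 0 := le_antisymm hle0 hge0
  refine ⟨0, 0, by constructor <;> norm_num, le_rfl, Or.inl rfl, fun w u hw hu => ?_⟩
  have := hopt w u hw hu
  rw [hψzx, hm0] at this
  rw [hψ00]
  exact_mod_cast this
end
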